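/- On the two-element set {0,1}, let t(x,y,z) = x∨(y∧z). Then a quadruple (x1,x2,x3,x4) ∈ {0,1}^4 lies in Δ = {(x1,x2,x3,x4) : x1 = x2 or x3 = x4} if and only if both t(x3,x4,x1) = t(x3,x4,x2) and t(x4,x3,x1) = t(x4,x3,x2) hold. Moreover no single equation f(x1,x2,x3,x4) = g(x1,x2,x3,x4) between quaternary term operations of the algebra ({0,1}; t) has solution set exactly Δ. -/
import Mathlib


/-- The operation `t(x,y,z) = x ∨ (y ∧ z)` on `{0,1}`. -/
def tOp (x y z : Bool) : Bool := x || (y && z)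

/-- Term operations of the algebra `({0,1}; t)`: compositions of `t` and
projections. -/
inductive TermOp : ∀ n : ℕ, ((Fin n → Bool) → Bool) → Prop
  | proj {n : ℕ} (i : Fin n) : TermOp n (fun x => x i)
  | app {n : ℕ} {f g h : (Fin n → Bool) → Bool} :
      TermOp n f → TermOp n g → TermOp n h →
      TermOp n (fun x => tOp (f x) (g x) (h x))

/-- `Δ` on `{0,1}`. -/
def DeltaBool : Set (Fin 4 → Bool) := {x | x 0 = x 1 ∨ x 2 = x 3}

/-- Every term operation is monotone and dominates some projection. -/
def GoodFn (n : ℕ) (f : (Fin n → Bool) → Bool) : Prop :=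
  (∀ x y : Fin n → Bool, (∀ k, x k = true → y k = true) → f x = true → f y = true) ∧
  ∃ i : Fin n, ∀ x : Fin n → Bool, x i = true → f x = true

theorem termOp_good {n : ℕ} {f : (Fin n → Bool) → Bool} (h : TermOp n f) :
    GoodFn n f := by
  induction h with
  | proj i =>
      exact ⟨fun x y hxy hx => hxy i hx, ⟨i, fun x hx => hx⟩⟩
  | app hf hg hh ihf ihg ihh =>
      obtain ⟨mf, i, hi⟩ := ihf
      obtain ⟨mg, _⟩ := ihg
      obtain ⟨mh, _⟩ := ihh
      refine ⟨?_, ⟨i, fun x hx => ?_⟩⟩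
      · intro x y hxy hx
        simp only [tOp, Bool.or_eq_true, Bool.and_eq_true] at hx ⊢
        rcases hx with hx | ⟨hx1, hx2⟩
        · exact Or.inl (mf x y hxy hx)
        · exact Or.inr ⟨mg x y hxy hx1, mh x y hxy hx2⟩
      · simp only [tOp, Bool.or_eq_true]
        exact Or.inl (hi x hx)

/-- A non-Δ point with `i`-th coordinate `true`, for each `i`. -/
def badPt : Fin 4 → (Fin 4 → Bool)
  | 0 => ![true, false, true, false]
  | 1 => ![false, true, true, false]
  | 2 => ![true, false, true, false]
  | 3 => ![true, false, false, true]

/-- `Δ` is defined by the two displayed equations over `t(x,y,z) = x ∨ (y ∧ z)`,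
but no single equation between quaternary term operations of `({0,1}; t)` has
solution set exactly `Δ`. -/
theorem stmt10 :
    (∀ x : Fin 4 → Bool, x ∈ DeltaBool ↔
      (tOp (x 2) (x 3) (x 0) = tOp (x 2) (x 3) (x 1) ∧
       tOp (x 3) (x 2) (x 0) = tOp (x 3) (x 2) (x 1))) ∧
    ¬ ∃ f g : (Fin 4 → Bool) → Bool, TermOp 4 f ∧ TermOp 4 g ∧
        {x | f x = g x} = DeltaBool := by
  constructor
  · intro x
    simp only [DeltaBool, Set.mem_setOf_eq, tOp]
    revert x
    decide
  · rintro ⟨f, g, hf, hg, hfg⟩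
    obtain ⟨mf, i, hi⟩ := termOp_good hf
    obtain ⟨mg, _⟩ := termOp_good hg
    -- the unit vector e_i is in Δ
    have heΔ : (fun k => decide (k = i)) ∈ DeltaBool := by
      fin_cases i <;> simp [DeltaBool]
    have hge : g (fun k => decide (k = i)) = true := by
      have : f (fun k => decide (k = i)) = g (fun k => decide (k = i)) := by
        have := hfg ▸ heΔ
        exact this
      rw [← this]
      exact hi _ (by simp)
    -- badPt i dominates e_i, hence g (badPt i) = true and f (badPt i) = true
    have hle : ∀ k : Fin 4, (decide (k = i) : Bool) = true → badPt i k = true := by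
      intro k hk
      have hk' : k = i := by simpa using hk
      subst hk'
      fin_cases k <;> decide
    have hgb : g (badPt i) = true := mg _ _ hle hge
    have hfb : f (badPt i) = true := hi _ (by fin_cases i <;> decide)
    have hbad : badPt i ∉ DeltaBool := by
      fin_cases i <;>
        simp [DeltaBool, Set.mem_setOf_eq, badPt, Matrix.cons_val_zero, Matrix.cons_val_one,
          Matrix.head_cons]
    have : badPt i ∈ DeltaBool := by
      rw [← hfg]
      exact (hfb.trans hgb.symm)
    exact hbad this
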